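/- Let f be analytic on an open set containing the closed unit disk with |f| = 1 on the unit circle, and let D₀ be a bounded connected component of {z ∈ 𝔻 : |f(z)| < δ} for some 0 < δ < 1 whose closure is in 𝔻. Then f restricted to D₀ attains every value of modulus < δ, and the number of zeros of f in D₀ (with multiplicity) is positive. -/

import Mathlib

open Set Metric

theorem face_attains_all_small_values (f : ℂ → ℂ) (U : Set ℂ) (hU : IsOpen U)
    (hcl : closure (ball (0 : ℂ) 1) ⊆ U) (hf : AnalyticOnNhd ℂ f U)
    (hmod : ∀ z : ℂ, ‖z‖ = 1 → ‖f z‖ = 1)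
    (δ : ℝ) (hδ0 : 0 < δ) (hδ1 : δ < 1)
    (D₀ : Set ℂ) (z₁ : ℂ) (hz₁ : z₁ ∈ ball (0 : ℂ) 1) (hz₁f : ‖f z₁‖ < δ)
    (hD₀ : D₀ = connectedComponentIn {z ∈ ball (0 : ℂ) 1 | ‖f z‖ < δ} z₁)
    (hD₀cl : closure D₀ ⊆ ball (0 : ℂ) 1) :
    (∀ v : ℂ, ‖v‖ < δ → ∃ z ∈ D₀, f z = v) ∧ ∃ z ∈ D₀, f z = 0 := by
  have hball : ball (0 : ℂ) 1 ⊆ U := subset_closure.trans hcl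
  have hfc : ContinuousOn f U := hf.continuousOn
  set S : Set ℂ := {z ∈ ball (0 : ℂ) 1 | ‖f z‖ < δ} with hSdef
  have hSeq : S = ball (0 : ℂ) 1 ∩ (fun z => ‖f z‖) ⁻¹' Iio δ := by
    ext z; simp [hSdef]
  have hSopen : IsOpen S := by
    rw [hSeq]
    exact ((hfc.mono hball).norm).isOpen_inter_preimage isOpen_ball isOpen_Iio
  have hz₁S : z₁ ∈ S := ⟨hz₁, hz₁f⟩
  have hD₀open : IsOpen D₀ := hD₀ ▸ hSopen.connectedComponentIn
  have hz₁D : z₁ ∈ D₀ := hD₀ ▸ mem_connectedComponentIn hz₁S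
  have hD₀S : D₀ ⊆ S := hD₀ ▸ connectedComponentIn_subset S z₁
  have hD₀ball : D₀ ⊆ ball (0 : ℂ) 1 := fun z hz => (hD₀S hz).1
  have hD₀U : D₀ ⊆ U := hD₀ball.trans hball
  have hD₀conn : IsPreconnected D₀ := hD₀ ▸ isPreconnected_connectedComponentIn
  -- continuity of f at points of U
  have hcont : ∀ w ∈ U, ContinuousAt f w := fun w hw => (hf w hw).continuousAt
  -- frontier points have |f| = δ
  have hfront : ∀ w ∈ closure D₀, w ∉ D₀ → ‖f w‖ = δ := by
    intro w hwcl hwD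
    have hwball : w ∈ ball (0 : ℂ) 1 := hD₀cl hwcl
    have hne : (nhdsWithin w D₀).NeBot := mem_closure_iff_nhdsWithin_neBot.mp hwcl
    have htend : Filter.Tendsto (fun z => ‖f z‖) (nhdsWithin w D₀) (nhds ‖f w‖) :=
      ((hcont w (hball hwball)).norm.tendsto).mono_left nhdsWithin_le_nhds
    have hle : ‖f w‖ ≤ δ := by
      refine le_of_tendsto htend ?_
      filter_upwards [self_mem_nhdsWithin] with z hz
      exact le_of_lt (hD₀S hz).2
    rcases lt_or_eq_of_le hle with hlt | heq
    · exfalso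
      have hwS : w ∈ S := ⟨hwball, hlt⟩
      have hins : IsPreconnected (insert w D₀) :=
        hD₀conn.subset_closure (subset_insert w D₀)
          (insert_subset hwcl subset_closure)
      have hsub : insert w D₀ ⊆ S := insert_subset hwS hD₀S
      have : insert w D₀ ⊆ connectedComponentIn S z₁ :=
        hins.subset_connectedComponentIn (mem_insert_of_mem w hz₁D) hsub
      exact hwD (hD₀ ▸ this (mem_insert w D₀))
    · exact heq
  -- f is not constant on D₀
  have hnc : ¬ ∃ c, ∀ z ∈ D₀, f z = c := by
    rintro ⟨c, hc⟩
    have hev : f =ᶠ[nhds z₁] fun _ => c := by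
      filter_upwards [hD₀open.mem_nhds hz₁D] with z hz using hc z hz
    have hEq : EqOn f (fun _ => c) (ball (0 : ℂ) 1) :=
      (hf.mono hball).eqOn_of_preconnected_of_eventuallyEq analyticOnNhd_const
        (convex_ball (0 : ℂ) 1).isPreconnected hz₁ hev
    have h1cl : (1 : ℂ) ∈ closure (ball (0 : ℂ) 1) := by
      rw [closure_ball (0 : ℂ) one_ne_zero]
      simp
    have hne : (nhdsWithin (1 : ℂ) (ball (0 : ℂ) 1)).NeBot :=
      mem_closure_iff_nhdsWithin_neBot.mp h1cl
    have htend : Filter.Tendsto f (nhdsWithin (1 : ℂ) (ball (0 : ℂ) 1)) (nhds (f 1)) :=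
      ((hcont 1 (hcl h1cl)).tendsto).mono_left nhdsWithin_le_nhds
    have htend' : Filter.Tendsto f (nhdsWithin (1 : ℂ) (ball (0 : ℂ) 1)) (nhds c) := by
      refine Filter.Tendsto.congr' ?_ tendsto_const_nhds
      filter_upwards [self_mem_nhdsWithin] with z hz using (hEq hz).symm
    have hfc1 : f 1 = c := tendsto_nhds_unique htend htend'
    have : ‖c‖ = 1 := hfc1 ▸ hmod 1 (by simp)
    have hclt : ‖c‖ < δ := (hc z₁ hz₁D) ▸ hz₁f
    linarith
  -- open mapping
  have hTopen : IsOpen (f '' D₀) := by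
    rcases (hf.mono hD₀U).is_constant_or_isOpen hD₀conn with h | h
    · exact absurd h hnc
    · exact h D₀ Subset.rfl hD₀open
  -- closure D₀ is compact
  have hKcomp : IsCompact (closure D₀) :=
    (isCompact_closedBall (0 : ℂ) 1).of_isClosed_subset isClosed_closure
      (hD₀cl.trans ball_subset_closedBall)
  have hfK : IsCompact (f '' closure D₀) :=
    hKcomp.image_of_continuousOn (hfc.mono ((hD₀cl.trans hball)))
  have hclT : closure (f '' D₀) ⊆ f '' closure D₀ :=
    closure_minimal (image_mono (f := f) subset_closure) hfK.isClosed
  -- ball 0 δ ⊆ f '' D₀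
  have hmain : ball (0 : ℂ) δ ⊆ f '' D₀ := by
    refine (convex_ball (0 : ℂ) δ).isPreconnected.subset_left_of_subset_union hTopen
      isClosed_closure.isOpen_compl
      (disjoint_compl_right.mono_left subset_closure) ?_
      ⟨f z₁, mem_ball_zero_iff.mpr hz₁f, mem_image_of_mem f hz₁D⟩
    intro w hw
    by_cases hwT : w ∈ closure (f '' D₀)
    · left
      rcases hclT hwT with ⟨z, hz, rfl⟩
      by_cases hzD : z ∈ D₀
      · exact mem_image_of_mem f hzD
      · exact absurd (hfront z hz hzD) (ne_of_lt (mem_ball_zero_iff.mp hw))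
    · exact Or.inr hwT
  constructor
  · intro v hv
    rcases hmain (mem_ball_zero_iff.mpr hv) with ⟨z, hz, hfz⟩
    exact ⟨z, hz, hfz⟩
  · rcases hmain (mem_ball_self hδ0) with ⟨z, hz, hfz⟩
    exact ⟨z, hz, hfz⟩
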